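/- arXiv:2511.16409 — 4 statements merged into one kernel-verified Lean document; each statement's English description precedes it below -/
import Mathlib

section
/- Let 1 → N → G → Q → 1 be a group extension, i.e., let p : G → Q be a surjective group homomorphism with kernel N. If every finitely generated subgroup of Q is finitely presented, and every subgroup of N is finitely presented, then every finitely generated subgroup of G is finitely presented. (This is the case (n,m) = (1,2) of part (i) of the extension inheritance lemma: if Q is coherent and N is (0,2)-coherent, then G is coherent.) -/
open Subgroup Function

/-- A group is finitely presented if it admits a presentation with finitely many
generators and finitely many relations. -/
def Group.FinitelyPresented (G : Type*) [Group G] : Prop :=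
  ∃ (n : ℕ) (rels : Finset (FreeGroup (Fin n))),
    Nonempty (G ≃* PresentedGroup (rels : Set (FreeGroup (Fin n))))

lemma fp_of_mulEquiv {G H : Type*} [Group G] [Group H] (e : G ≃* H)
    (h : Group.FinitelyPresented H) : Group.FinitelyPresented G := by
  obtain ⟨n, rels, ⟨i⟩⟩ := h
  exact ⟨n, rels, ⟨e.trans i⟩⟩

lemma fp_of_iso_presented {H : Type*} [Group H] {α : Type} [Fintype α]
    {R : Set (FreeGroup α)} (hR : R.Finite) (i : H ≃* PresentedGroup R) :
    Group.FinitelyPresented H := by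
  classical
  let e : α ≃ Fin (Fintype.card α) := Fintype.equivFin α
  let c : FreeGroup α ≃* FreeGroup (Fin (Fintype.card α)) := FreeGroup.freeGroupCongr e
  have hmap : (Subgroup.normalClosure R).map c.toMonoidHom
      = Subgroup.normalClosure ((c : FreeGroup α → FreeGroup (Fin (Fintype.card α))) '' R) :=
    Subgroup.map_normalClosure R c.toMonoidHom c.surjective
  let j : PresentedGroup R ≃* PresentedGroup ((c : FreeGroup α → _) '' R) :=
    QuotientGroup.congr _ _ c hmap
  have hR' : ((c : FreeGroup α → FreeGroup (Fin (Fintype.card α))) '' R).Finite :=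
    hR.image _
  refine ⟨Fintype.card α, hR'.toFinset, ⟨?_⟩⟩
  rw [Set.Finite.coe_toFinset]
  exact i.trans j

lemma fp_of_extension_aux {H K : Type*} [Group H] [Group K] (e : H →* K)
    (he : Function.Surjective e)
    (n m : ℕ) (rels₂ : Finset (FreeGroup (Fin n))) (rels₁ : Finset (FreeGroup (Fin m)))
    (κ : K ≃* PresentedGroup (rels₂ : Set (FreeGroup (Fin n))))
    (μ : PresentedGroup (rels₁ : Set (FreeGroup (Fin m))) ≃* e.ker) :
    Group.FinitelyPresented H := by
  classical
  set q : H →* PresentedGroup (rels₂ : Set (FreeGroup (Fin n))) := κ.toMonoidHom.comp e with hq_def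
  have hq : Surjective q := κ.surjective.comp he
  have hkerq : q.ker = e.ker := by
    ext h
    simp [hq_def, MonoidHom.mem_ker, map_eq_one_iff _ κ.injective]
  set x : Fin m → H := fun i => ((μ (PresentedGroup.of i) : e.ker) : H) with hx_def
  have hx : ∀ i, x i ∈ e.ker := fun i => (μ (PresentedGroup.of i)).2
  set y : Fin n → H := fun j => (hq (PresentedGroup.of j)).choose with hy_def
  have hy : ∀ j, q (y j) = PresentedGroup.of j := fun j => (hq (PresentedGroup.of j)).choose_spec
  set inL : FreeGroup (Fin m) →* FreeGroup (Fin m ⊕ Fin n) := FreeGroup.map Sum.inl with hinL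
  set inR : FreeGroup (Fin n) →* FreeGroup (Fin m ⊕ Fin n) := FreeGroup.map Sum.inr with hinR
  set f : FreeGroup (Fin m ⊕ Fin n) →* H := FreeGroup.lift (Sum.elim x y) with hf_def
  have hfL : ∀ i, f (inL (FreeGroup.of i)) = x i := by intro i; simp [hinL, hf_def]
  have hfR : ∀ j, f (inR (FreeGroup.of j)) = y j := by intro j; simp [hinR, hf_def]
  -- θ₀
  set θ₀ : PresentedGroup (rels₁ : Set (FreeGroup (Fin m))) →* H :=
    (e.ker.subtype).comp μ.toMonoidHom with hθ₀_def
  have hθ₀ : ∀ w, θ₀ (PresentedGroup.mk _ w) = f (inL w) := by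
    intro w
    have : θ₀.comp (PresentedGroup.mk _) = f.comp inL := by
      apply FreeGroup.ext_hom
      intro i
      simp [hθ₀_def, hfL]
      rfl
    exact congrFun (congrArg (fun g => g.toFun) this) w
  -- every kernel element is an f-image of an inL word
  have hrange_ker : ∀ h ∈ e.ker, ∃ w : FreeGroup (Fin m), f (inL w) = h := by
    intro h hh
    obtain ⟨w, hw⟩ := PresentedGroup.mk_surjective _ (μ.symm ⟨h, hh⟩)
    refine ⟨w, ?_⟩
    rw [← hθ₀ w] at *
    rw [hw]
    show (↑(μ (μ.symm ⟨h, hh⟩)) : H) = h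
    rw [μ.apply_symm_apply]
  have hfk : ∀ w, q (f (inR w)) = PresentedGroup.mk (rels₂ : Set (FreeGroup (Fin n))) w := by
    intro w
    have : (q.comp f).comp inR = PresentedGroup.mk _ := by
      apply FreeGroup.ext_hom
      intro j
      simp [hfR, hy]
      rfl
    exact congrFun (congrArg (fun g => g.toFun) this) w
  -- the word-choosing function
  set W : H → FreeGroup (Fin m) := fun h =>
    if hh : h ∈ e.ker then (hrange_ker h hh).choose else 1 with hW_def
  have hW : ∀ h (hh : h ∈ e.ker), f (inL (W h)) = h := by
    intro h hh
    simp only [hW_def, dif_pos hh]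
    exact (hrange_ker h hh).choose_spec
  -- relators
  set ρ : FreeGroup (Fin m ⊕ Fin n) → FreeGroup (Fin m ⊕ Fin n) :=
    fun u => u * (inL (W (f u)))⁻¹ with hρ_def
  set cc : Fin n → Bool → FreeGroup (Fin m ⊕ Fin n) :=
    fun j b => if b then FreeGroup.of (Sum.inr j) else (FreeGroup.of (Sum.inr j))⁻¹ with hcc_def
  set R₁ : Set (FreeGroup (Fin m ⊕ Fin n)) := inL '' (rels₁ : Set (FreeGroup (Fin m))) with hR₁
  set R₂ : Set (FreeGroup (Fin m ⊕ Fin n)) := (ρ ∘ inR) '' (rels₂ : Set (FreeGroup (Fin n)))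
    with hR₂
  set R₃ : Set (FreeGroup (Fin m ⊕ Fin n)) := Set.range (fun t : Fin n × Fin m × Bool =>
    ρ (cc t.1 t.2.2 * FreeGroup.of (Sum.inl t.2.1) * (cc t.1 t.2.2)⁻¹)) with hR₃
  set R : Set (FreeGroup (Fin m ⊕ Fin n)) := R₁ ∪ R₂ ∪ R₃ with hR_def
  have hRfin : R.Finite := by
    refine ((Set.Finite.union ?_ ?_).union ?_)
    · exact (rels₁.finite_toSet).image _
    · exact (rels₂.finite_toSet).image _
    · exact Set.finite_range _
  -- f kills kernel-type relators
  have hρker : ∀ u, f u ∈ e.ker → f (ρ u) = 1 := by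
    intro u hu
    simp only [hρ_def, map_mul, map_inv, hW _ hu, mul_inv_cancel]
  -- conjugates of x-generators are in the kernel
  have hconj_ker : ∀ (j : Fin n) (b : Bool) (i : Fin m),
      f (cc j b * FreeGroup.of (Sum.inl i) * (cc j b)⁻¹) ∈ e.ker := by
    intro j b i
    have : f (FreeGroup.of (Sum.inl i)) ∈ e.ker := by
      have : f (FreeGroup.of (Sum.inl i)) = x i := by simp [hf_def]
      rw [this]; exact hx i
    simp only [map_mul, map_inv]
    exact (MonoidHom.normal_ker e).conj_mem _ this _
  have hR2ker : ∀ r ∈ (rels₂ : Set (FreeGroup (Fin n))), f (inR r) ∈ e.ker := by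
    intro r hr
    rw [← hkerq, MonoidHom.mem_ker, hfk r]
    exact (QuotientGroup.eq_one_iff _).2 (Subgroup.subset_normalClosure hr)
  have hRone : ∀ r ∈ R, FreeGroup.lift (Sum.elim x y) r = 1 := by
    intro r hr
    show f r = 1
    rcases hr with (hr | hr) | hr
    · obtain ⟨w, hw, rfl⟩ := hr
      rw [← hθ₀ w]
      have : PresentedGroup.mk (rels₁ : Set (FreeGroup (Fin m))) w = 1 :=
        (QuotientGroup.eq_one_iff _).2 (Subgroup.subset_normalClosure hw)
      rw [this, map_one]
    · obtain ⟨w, hw, rfl⟩ := hr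
      exact hρker _ (hR2ker w hw)
    · obtain ⟨t, rfl⟩ := hr
      exact hρker _ (hconj_ker t.1 t.2.2 t.2.1)
  -- the presented group and the comparison map φ
  set P := PresentedGroup R with hP_def
  set mkP : FreeGroup (Fin m ⊕ Fin n) →* P := PresentedGroup.mk R with hmkP
  set φ : P →* H := PresentedGroup.toGroup hRone with hφ_def
  have hφmk : ∀ w, φ (mkP w) = f w := fun w => rfl
  -- τ : P →* PresentedGroup rels₂
  set t2 : Fin m ⊕ Fin n → PresentedGroup (rels₂ : Set (FreeGroup (Fin n))) :=
    Sum.elim (fun _ => 1) (fun j => PresentedGroup.of j) with ht2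
  set g2 : FreeGroup (Fin m ⊕ Fin n) →* PresentedGroup (rels₂ : Set (FreeGroup (Fin n))) :=
    FreeGroup.lift t2 with hg2
  have hg2L : ∀ w, g2 (inL w) = 1 := by
    intro w
    have : g2.comp inL = 1 := by
      apply FreeGroup.ext_hom; intro i; simp [hg2, hinL, ht2]
    exact congrFun (congrArg (fun g => g.toFun) this) w
  have hg2R : ∀ w, g2 (inR w) = PresentedGroup.mk _ w := by
    intro w
    have : g2.comp inR = PresentedGroup.mk _ := by
      apply FreeGroup.ext_hom; intro j; simp [hg2, hinR, ht2]; rfl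
    exact congrFun (congrArg (fun g => g.toFun) this) w
  have hg2one : ∀ r ∈ R, FreeGroup.lift t2 r = 1 := by
    intro r hr
    show g2 r = 1
    rcases hr with (hr | hr) | hr
    · obtain ⟨w, hw, rfl⟩ := hr; exact hg2L w
    · obtain ⟨w, hw, rfl⟩ := hr
      simp only [Function.comp_apply, hρ_def, map_mul, map_inv, hg2L, hg2R, inv_one, mul_one]
      exact (QuotientGroup.eq_one_iff _).2 (Subgroup.subset_normalClosure hw)
    · obtain ⟨t, rfl⟩ := hr
      have h1 : g2 (FreeGroup.of (Sum.inl t.2.1)) = 1 := by simp [hg2, ht2]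
      simp only [hρ_def, map_mul, map_inv, hg2L, inv_one, mul_one, h1]
      group
  set τ : P →* PresentedGroup (rels₂ : Set (FreeGroup (Fin n))) :=
    PresentedGroup.toGroup hg2one with hτ_def
  have hτmk : ∀ w, τ (mkP w) = g2 w := fun w => rfl
  have hτofL : ∀ i : Fin m, τ (PresentedGroup.of (Sum.inl i) : P) = 1 := by
    intro i
    show g2 (FreeGroup.of (Sum.inl i)) = 1
    rw [show (FreeGroup.of (Sum.inl i) : FreeGroup (Fin m ⊕ Fin n)) = inL (FreeGroup.of i) by
      simp [hinL]]
    exact hg2L _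
  have hτofR : ∀ j : Fin n, τ (PresentedGroup.of (Sum.inr j) : P) = PresentedGroup.of j := by
    intro j
    show g2 (FreeGroup.of (Sum.inr j)) = _
    rw [show (FreeGroup.of (Sum.inr j) : FreeGroup (Fin m ⊕ Fin n)) = inR (FreeGroup.of j) by
      simp [hinR]]
    rw [hg2R]
    rfl
  have hφofL : ∀ i : Fin m, φ (PresentedGroup.of (Sum.inl i) : P) = x i := by
    intro i; show f (FreeGroup.of (Sum.inl i)) = x i; simp [hf_def]
  have hφofR : ∀ j : Fin n, φ (PresentedGroup.of (Sum.inr j) : P) = y j := by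
    intro j; show f (FreeGroup.of (Sum.inr j)) = y j; simp [hf_def]
  -- the subgroup X generated by the x-generators
  set X : Subgroup P := Subgroup.closure
    (Set.range fun i : Fin m => (PresentedGroup.of (Sum.inl i) : P)) with hX_def
  have hXw : ∀ w : FreeGroup (Fin m), mkP (inL w) ∈ X := by
    intro w
    induction w using FreeGroup.induction_on with
    | C1 => rw [map_one, map_one]; exact X.one_mem
    | of i => exact Subgroup.subset_closure ⟨i, rfl⟩
    | inv_of i h => rw [map_inv, map_inv]; exact X.inv_mem h
    | mul u v hu hv => rw [map_mul, map_mul]; exact X.mul_mem hu hv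
  -- conjugates of generators of X by y-generators (and inverses) are in X
  have hconjX : ∀ (j : Fin n) (b : Bool) (i : Fin m),
      mkP (cc j b) * PresentedGroup.of (Sum.inl i) * (mkP (cc j b))⁻¹ ∈ X := by
    intro j b i
    have hrel : mkP (ρ (cc j b * FreeGroup.of (Sum.inl i) * (cc j b)⁻¹)) = 1 :=
      (QuotientGroup.eq_one_iff _).2
        (Subgroup.subset_normalClosure (Or.inr ⟨(j, i, b), rfl⟩))
    have hrel' : mkP (cc j b * FreeGroup.of (Sum.inl i) * (cc j b)⁻¹)
        = mkP (inL (W (f (cc j b * FreeGroup.of (Sum.inl i) * (cc j b)⁻¹)))) := by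
      rw [← mul_inv_eq_one, ← map_inv, ← map_mul]
      exact hrel
    have : mkP (cc j b * FreeGroup.of (Sum.inl i) * (cc j b)⁻¹) ∈ X := by
      rw [hrel']; exact hXw _
    simpa only [map_mul, map_inv, show ∀ a, mkP (FreeGroup.of a) = (PresentedGroup.of a : P) from fun _ => rfl] using this
  -- X is normal
  have hconj_le : ∀ p : P, (∀ i : Fin m, p * PresentedGroup.of (Sum.inl i) * p⁻¹ ∈ X) →
      ∀ z ∈ X, p * z * p⁻¹ ∈ X := by
    intro p hp z hz
    have : X ≤ X.comap ((MulAut.conj p).toMonoidHom) := by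
      rw [hX_def]
      apply Subgroup.closure_le _ |>.2
      rintro _ ⟨i, rfl⟩
      simpa [Subgroup.mem_comap, MulAut.conj] using hp i
    simpa [Subgroup.mem_comap, MulAut.conj] using this hz
  set C : Subgroup P :=
    { carrier := {p : P | ∀ z ∈ X, p * z * p⁻¹ ∈ X ∧ p⁻¹ * z * p ∈ X}
      one_mem' := by intro z hz; simp only [one_mul, inv_one, mul_one]; exact ⟨hz, hz⟩
      mul_mem' := by
        intro a b ha hb
        intro z hz
        constructor
        · have := (ha (b * z * b⁻¹) (hb z hz).1).1
          convert this using 1; group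
        · have := (hb (a⁻¹ * z * a) (ha z hz).2).2
          convert this using 1; group
      inv_mem' := by
        intro a ha z hz
        refine ⟨?_, ?_⟩
        · convert (ha z hz).2 using 2; group
        · convert (ha z hz).1 using 2; group } with hC_def
  have hCall : ∀ p : P, p ∈ C := by
    intro p
    refine PresentedGroup.generated_by R C ?_ p
    intro a z hz
    match a with
    | Sum.inl i =>
      have hgen : (PresentedGroup.of (Sum.inl i) : P) ∈ X := Subgroup.subset_closure ⟨i, rfl⟩
      exact ⟨X.mul_mem (X.mul_mem hgen hz) (X.inv_mem hgen),
             X.mul_mem (X.mul_mem (X.inv_mem hgen) hz) hgen⟩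
    | Sum.inr j =>
      constructor
      · refine hconj_le _ ?_ z hz
        intro i
        have := hconjX j true i
        simpa [hcc_def, show ∀ a, mkP (FreeGroup.of a) = (PresentedGroup.of a : P) from fun _ => rfl] using this
      · refine hconj_le _ ?_ z hz
        intro i
        have := hconjX j false i
        simpa [hcc_def, show ∀ a, mkP (FreeGroup.of a) = (PresentedGroup.of a : P) from fun _ => rfl] using this
  have hXnormal : X.Normal := ⟨fun z hz p => ((hCall p) z hz).1⟩
  haveI := hXnormal
  set π : P →* P ⧸ X := QuotientGroup.mk' X with hπ_def
  -- τ kills X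
  have hXτ : X ≤ τ.ker := by
    rw [hX_def]
    apply (Subgroup.closure_le _).2
    rintro _ ⟨i, rfl⟩
    exact hτofL i
  set τ' : P ⧸ X →* PresentedGroup (rels₂ : Set (FreeGroup (Fin n))) :=
    QuotientGroup.lift X τ hXτ with hτ'_def
  have hτ'π : ∀ p : P, τ' (π p) = τ p := fun p => rfl
  -- σ : PresentedGroup rels₂ →* P ⧸ X
  have hσrels : ∀ r ∈ (rels₂ : Set (FreeGroup (Fin n))),
      FreeGroup.lift (fun j => π (PresentedGroup.of (Sum.inr j) : P)) r = 1 := by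
    intro r hr
    have hcomm : FreeGroup.lift (fun j => π (PresentedGroup.of (Sum.inr j) : P))
        = (π.comp mkP).comp inR := by
      apply FreeGroup.ext_hom; intro j; simp [hinR]; rfl
    rw [hcomm]
    show π (mkP (inR r)) = 1
    have hrel : mkP (ρ (inR r)) = 1 :=
      (QuotientGroup.eq_one_iff _).2
        (Subgroup.subset_normalClosure (Or.inl (Or.inr ⟨r, hr, rfl⟩)))
    have hrel' : mkP (inR r) = mkP (inL (W (f (inR r)))) := by
      rw [← mul_inv_eq_one, ← map_inv, ← map_mul]; exact hrel
    rw [hrel']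
    exact (QuotientGroup.eq_one_iff _).2 (hXw _)
  set σ : PresentedGroup (rels₂ : Set (FreeGroup (Fin n))) →* P ⧸ X :=
    PresentedGroup.toGroup hσrels with hσ_def
  -- σ is a left inverse of τ'
  have hστ : ∀ pb : P ⧸ X, σ (τ' pb) = pb := by
    have : σ.comp τ' = MonoidHom.id (P ⧸ X) := by
      apply QuotientGroup.monoidHom_ext
      apply PresentedGroup.ext
      intro a
      match a with
      | Sum.inl i =>
        show σ (τ (PresentedGroup.of (Sum.inl i))) = π (PresentedGroup.of (Sum.inl i))
        have h1 : τ (PresentedGroup.of (Sum.inl i) : P) = 1 := hτofL i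
        have h2 : π (PresentedGroup.of (Sum.inl i) : P) = 1 :=
          (QuotientGroup.eq_one_iff _).2 (Subgroup.subset_closure ⟨i, rfl⟩)
        rw [h1, h2, map_one]
      | Sum.inr j =>
        show σ (τ (PresentedGroup.of (Sum.inr j))) = π (PresentedGroup.of (Sum.inr j))
        have h1 : τ (PresentedGroup.of (Sum.inr j) : P) = PresentedGroup.of j := hτofR j
        rw [h1]
        show (FreeGroup.lift fun j => π (PresentedGroup.of (Sum.inr j) : P)) (FreeGroup.of j)
            = π (PresentedGroup.of (Sum.inr j))
        exact FreeGroup.lift_apply_of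
    intro pb
    exact congrFun (congrArg (fun g => g.toFun) this) pb
  -- θ : PresentedGroup rels₁ →* P
  have hθrels : ∀ r ∈ (rels₁ : Set (FreeGroup (Fin m))),
      FreeGroup.lift (fun i => (PresentedGroup.of (Sum.inl i) : P)) r = 1 := by
    intro r hr
    have hcomm : FreeGroup.lift (fun i => (PresentedGroup.of (Sum.inl i) : P))
        = mkP.comp inL := by
      apply FreeGroup.ext_hom; intro i; simp [hinL]; rfl
    rw [hcomm]
    exact (QuotientGroup.eq_one_iff _).2
      (Subgroup.subset_normalClosure (Or.inl (Or.inl ⟨r, hr, rfl⟩)))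
  set θ : PresentedGroup (rels₁ : Set (FreeGroup (Fin m))) →* P :=
    PresentedGroup.toGroup hθrels with hθ_def2
  have hφθ : ∀ z, φ (θ z) = θ₀ z := by
    have : φ.comp θ = θ₀ := by
      apply PresentedGroup.ext
      intro i
      show φ (θ (PresentedGroup.of i)) = θ₀ (PresentedGroup.of i)
      have h1 : θ (PresentedGroup.of i) = PresentedGroup.of (Sum.inl i) := by
        show (FreeGroup.lift fun i => (PresentedGroup.of (Sum.inl i) : P)) (FreeGroup.of i) = _
        exact FreeGroup.lift_apply_of
      have h2 : θ₀ (PresentedGroup.of i) = x i := rfl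
      rw [h1, h2]
      show f (FreeGroup.of (Sum.inl i)) = x i
      simp [hf_def]
    exact fun z => congrFun (congrArg (fun g => g.toFun) this) z
  have hXθ : X ≤ θ.range := by
    rw [hX_def]
    apply (Subgroup.closure_le _).2
    rintro _ ⟨i, rfl⟩
    refine ⟨PresentedGroup.of i, ?_⟩
    show (FreeGroup.lift fun i => (PresentedGroup.of (Sum.inl i) : P)) (FreeGroup.of i) = _
    exact FreeGroup.lift_apply_of
  -- τ = q ∘ φ
  have hτφ : ∀ pp : P, τ pp = q (φ pp) := by
    have : τ = q.comp φ := by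
      apply PresentedGroup.ext
      intro a
      match a with
      | Sum.inl i =>
        have h1 : τ (PresentedGroup.of (Sum.inl i) : P) = 1 := hτofL i
        have h2 : φ (PresentedGroup.of (Sum.inl i) : P) = x i := hφofL i
        show τ (PresentedGroup.of (Sum.inl i)) = q (φ (PresentedGroup.of (Sum.inl i)))
        rw [h1, h2]
        have : x i ∈ q.ker := by rw [hkerq]; exact hx i
        exact (MonoidHom.mem_ker.mp this).symm
      | Sum.inr j =>
        have h2 : φ (PresentedGroup.of (Sum.inr j) : P) = y j := hφofR j
        show τ (PresentedGroup.of (Sum.inr j)) = q (φ (PresentedGroup.of (Sum.inr j)))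
        rw [h2, hy j, hτofR j]
    exact fun pp => congrFun (congrArg (fun g => g.toFun) this) pp
  -- φ is injective
  have hφinj : Function.Injective φ := by
    rw [injective_iff_map_eq_one]
    intro g hg
    have h1 : τ g = 1 := by rw [hτφ g, hg, map_one]
    have h2 : π g = 1 := by
      have := hστ (π g)
      rw [hτ'π g, h1, map_one] at this
      exact this.symm
    have h3 : g ∈ X := (QuotientGroup.eq_one_iff _).1 h2
    obtain ⟨z, rfl⟩ := hXθ h3
    have h4 : θ₀ z = 1 := by rw [← hφθ z, hg]
    have h5 : μ z = 1 := by
      apply Subtype.ext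
      simpa [hθ₀_def] using h4
    have h6 : z = 1 := by
      apply μ.injective
      rw [h5, map_one]
    rw [h6, map_one]
  -- φ is surjective
  have hf_surj : Function.Surjective f := by
    intro h
    obtain ⟨w₂, hw₂⟩ := PresentedGroup.mk_surjective (rels₂ : Set (FreeGroup (Fin n))) (q h)
    have hker : h * (f (inR w₂))⁻¹ ∈ e.ker := by
      rw [← hkerq, MonoidHom.mem_ker, map_mul, map_inv, hfk w₂, hw₂, mul_inv_cancel]
    obtain ⟨w₁, hw₁⟩ := hrange_ker _ hker
    exact ⟨inL w₁ * inR w₂, by rw [map_mul, hw₁]; group⟩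
  have hφsurj : Function.Surjective φ := by
    intro h
    obtain ⟨w, hw⟩ := hf_surj h
    exact ⟨mkP w, by rw [hφmk, hw]⟩
  exact fp_of_iso_presented hRfin (MulEquiv.ofBijective φ ⟨hφinj, hφsurj⟩).symm

lemma fp_of_extension {H K : Type*} [Group H] [Group K] (e : H →* K)
    (he : Function.Surjective e) (hK : Group.FinitelyPresented K)
    (hker : Group.FinitelyPresented e.ker) : Group.FinitelyPresented H := by
  obtain ⟨n, rels₂, ⟨κ⟩⟩ := hK
  obtain ⟨m, rels₁, ⟨μ'⟩⟩ := hker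
  exact fp_of_extension_aux e he n m rels₂ rels₁ κ μ'.symm

/-- Extension inheritance for coherence, part (i), case (n,m) = (1,2):
if `p : G → Q` is a surjective group homomorphism with kernel `N`, every finitely
generated subgroup of `Q` is finitely presented, and every subgroup of `N` is finitely
presented, then every finitely generated subgroup of `G` is finitely presented. -/
theorem coherent_of_group_extension {G Q : Type*} [Group G] [Group Q]
    (p : G →* Q) (hp : Function.Surjective p) (N : Subgroup G) (hN : N = p.ker)
    (hQ : ∀ K : Subgroup Q, K.FG → Group.FinitelyPresented K)
    (hNcoh : ∀ K : Subgroup ↥N, Group.FinitelyPresented K) :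
    ∀ H : Subgroup G, H.FG → Group.FinitelyPresented H := by
  intro H hH
  set e : ↥H →* ↥(H.map p) := p.subgroupMap H with he_def
  have he : Function.Surjective e := p.subgroupMap_surjective H
  -- the image is finitely generated
  have hKfg : (H.map p).FG := by
    rw [Subgroup.fg_iff] at hH ⊢
    obtain ⟨S, hS, hSfin⟩ := hH
    exact ⟨p '' S, by rw [← hS, MonoidHom.map_closure], hSfin.image p⟩
  -- the kernel of e is isomorphic to a subgroup of N
  have hmemN : ∀ z : ↥H, z ∈ e.ker ↔ (z : G) ∈ N := by
    intro z
    rw [hN, MonoidHom.mem_ker, MonoidHom.mem_ker]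
    rw [Subtype.ext_iff]
    simp [he_def]
  let ψ : ↥e.ker ≃* ↥(H.subgroupOf N) :=
    { toFun := fun z => ⟨⟨(z : ↥H), (hmemN z).1 z.2⟩, by
        rw [Subgroup.mem_subgroupOf]; exact (z : ↥H).2⟩
      invFun := fun w => ⟨⟨(w : ↥N), (Subgroup.mem_subgroupOf).1 w.2⟩, by
        rw [hmemN]; exact (w : ↥N).2⟩
      left_inv := fun z => by ext; rfl
      right_inv := fun w => by ext; rfl
      map_mul' := fun a b => by ext; rfl }
  have hkerFP : Group.FinitelyPresented ↥e.ker :=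
    fp_of_mulEquiv ψ (hNcoh (H.subgroupOf N))
  exact fp_of_extension e he (hQ (H.map p) hKfg) hkerFP
end

section
/- Let 1 → N → G → Q → 1 be a group extension, i.e., let p : G → Q be a surjective group homomorphism with kernel N. If every finitely generated subgroup of G is finitely presented and N is finitely generated, then every finitely generated subgroup of Q is finitely presented. (This is the case (n,m) = (1,2) of part (ii) of the extension inheritance lemma: if G is coherent and N is of type F₁, then Q is coherent.) -/
/-- Characterization of finite presentability via surjections from free groups. -/
lemma Group.finitelyPresented_iff (G : Type*) [Group G] :
    Group.FinitelyPresented G ↔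
      ∃ (n : ℕ) (S : Finset (FreeGroup (Fin n))) (f : FreeGroup (Fin n) →* G),
        Function.Surjective f ∧ f.ker = Subgroup.normalClosure (S : Set (FreeGroup (Fin n))) := by
  constructor
  · rintro ⟨n, rels, ⟨e⟩⟩
    refine ⟨n, rels,
      (e.symm.toMonoidHom.comp
        (QuotientGroup.mk' (Subgroup.normalClosure (rels : Set (FreeGroup (Fin n)))))), ?_, ?_⟩
    · exact e.symm.surjective.comp (QuotientGroup.mk'_surjective _)
    · ext x
      rw [MonoidHom.mem_ker]
      show e.symm (QuotientGroup.mk' _ x) = 1 ↔ _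
      exact (MulEquiv.map_eq_one_iff e.symm).trans (QuotientGroup.eq_one_iff x)
  · rintro ⟨n, S, f, hf, hker⟩
    refine ⟨n, S, ⟨?_⟩⟩
    exact ((QuotientGroup.quotientKerEquivOfSurjective f hf).symm.trans
      (QuotientGroup.quotientMulEquivOfEq hker))

/-- Finite presentability transfers along `MulEquiv`. -/
lemma Group.FinitelyPresented.of_mulEquiv {G H : Type*} [Group G] [Group H]
    (e : G ≃* H) (h : Group.FinitelyPresented G) : Group.FinitelyPresented H := by
  obtain ⟨n, rels, ⟨e'⟩⟩ := h
  exact ⟨n, rels, ⟨e.symm.trans e'⟩⟩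

/-- A quotient of a finitely presented group by a finitely generated normal subgroup
is finitely presented. -/
lemma Group.FinitelyPresented.quotient {G : Type*} [Group G]
    (hG : Group.FinitelyPresented G) (M : Subgroup G) [M.Normal] (hM : M.FG) :
    Group.FinitelyPresented (G ⧸ M) := by
  classical
  rw [Group.finitelyPresented_iff] at hG ⊢
  obtain ⟨n, S, f, hf, hker⟩ := hG
  obtain ⟨A, hA⟩ := hM
  set T : Finset (FreeGroup (Fin n)) := A.image (Function.surjInv hf) with hT
  refine ⟨n, S ∪ T, (QuotientGroup.mk' M).comp f, ?_, ?_⟩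
  · exact (QuotientGroup.mk'_surjective M).comp hf
  · have himg : f '' (T : Set (FreeGroup (Fin n))) = (A : Set G) := by
      ext x
      simp only [hT, Finset.coe_image, Set.image_image,
        Function.surjInv_eq hf, Set.image_id']
    have hkercomp : ((QuotientGroup.mk' M).comp f).ker = M.comap f := by
      ext x
      simp [MonoidHom.mem_ker]
    rw [hkercomp]
    apply le_antisymm
    · intro x hx
      have hfx : f x ∈ M := hx
      rw [← hA] at hfx
      have : f x ∈ Subgroup.map f (Subgroup.closure (T : Set (FreeGroup (Fin n)))) := by
        rw [MonoidHom.map_closure, himg]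
        exact hfx
      obtain ⟨w, hw, hweq⟩ := this
      have h1 : x * w⁻¹ ∈ f.ker := by
        simp [MonoidHom.mem_ker, hweq]
      rw [hker] at h1
      have h2 : x * w⁻¹ ∈ Subgroup.normalClosure ((S ∪ T : Finset _) : Set (FreeGroup (Fin n))) := by
        refine Subgroup.normalClosure_mono ?_ h1
        simp
      have h3 : w ∈ Subgroup.normalClosure ((S ∪ T : Finset _) : Set (FreeGroup (Fin n))) := by
        refine Subgroup.closure_le _ |>.2 ?_ hw
        intro t ht
        exact Subgroup.subset_normalClosure (by simp [ht])
      simpa using mul_mem h2 h3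
    · refine Subgroup.normalClosure_le_normal ?_
      intro x hx
      simp only [Finset.coe_union, Set.mem_union] at hx
      rcases hx with hx | hx
      · have hx1 : x ∈ f.ker := by rw [hker]; exact Subgroup.subset_normalClosure hx
        exact Subgroup.mem_comap.2 (by rw [MonoidHom.mem_ker.mp hx1]; exact one_mem M)
      · have : f x ∈ (A : Set G) := by
          rw [← himg]; exact ⟨x, hx, rfl⟩
        exact Subgroup.mem_comap.2 (hA ▸ Subgroup.subset_closure this)

/-- Extension inheritance for coherence, part (ii), case (n,m) = (1,2):
if `p : G → Q` is a surjective group homomorphism with finitely generated kernel `N`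
and every finitely generated subgroup of `G` is finitely presented, then every finitely
generated subgroup of `Q` is finitely presented. -/
theorem coherent_of_quotient_of_group_extension {G Q : Type*} [Group G] [Group Q]
    (p : G →* Q) (hp : Function.Surjective p) (N : Subgroup G) (hN : N = p.ker)
    (hG : ∀ H : Subgroup G, H.FG → Group.FinitelyPresented H)
    (hNfg : N.FG) :
    ∀ K : Subgroup Q, K.FG → Group.FinitelyPresented K := by
  classical
  intro K hK
  -- H is the full preimage of K
  set H : Subgroup G := K.comap p with hHdef
  have hNH : N ≤ H := by
    intro x hx
    have : p x = 1 := by rw [hN] at hx; exact hx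
    exact Subgroup.mem_comap.2 (by rw [this]; exact one_mem K)
  -- H is finitely generated
  obtain ⟨B, hB⟩ := hK
  obtain ⟨A, hAgen⟩ := id hNfg
  have hHfg : H.FG := by
    refine ⟨A ∪ B.image (Function.surjInv hp), ?_⟩
    have himg : p '' ((B.image (Function.surjInv hp) : Finset G) : Set G) = (B : Set Q) := by
      ext x
      simp only [Finset.coe_image, Set.image_image, Function.surjInv_eq hp, Set.image_id']
    apply le_antisymm
    · refine Subgroup.closure_le _ |>.2 ?_
      intro x hx
      simp only [Finset.coe_union, Set.mem_union] at hx
      rcases hx with hx | hx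
      · exact hNH (hAgen ▸ Subgroup.subset_closure hx)
      · refine Subgroup.mem_comap.2 ?_
        have : p x ∈ (B : Set Q) := by rw [← himg]; exact ⟨x, hx, rfl⟩
        exact hB ▸ Subgroup.subset_closure this
    · intro x hx
      have hpx : p x ∈ K := hx
      rw [← hB] at hpx
      have : p x ∈ Subgroup.map p (Subgroup.closure ((B.image (Function.surjInv hp) : Finset G) : Set G)) := by
        rw [MonoidHom.map_closure, himg]
        exact hpx
      obtain ⟨w, hw, hweq⟩ := this
      have h1 : x * w⁻¹ ∈ N := by
        rw [hN]
        simp [MonoidHom.mem_ker, hweq]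
      have h2 : x * w⁻¹ ∈ Subgroup.closure ((A ∪ B.image (Function.surjInv hp) : Finset G) : Set G) := by
        have := hAgen ▸ h1
        refine Subgroup.closure_mono ?_ this
        simp
      have h3 : w ∈ Subgroup.closure ((A ∪ B.image (Function.surjInv hp) : Finset G) : Set G) := by
        refine Subgroup.closure_mono ?_ hw
        simp
      simpa using mul_mem h2 h3
  -- the restricted map φ : H → K
  have hHfp := hG H hHfg
  let φ : H →* K := (p.domRestrict H).codRestrict K (fun x => x.2)
  have hφsurj : Function.Surjective φ := by
    rintro ⟨k, hk⟩
    obtain ⟨g, hg⟩ := hp k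
    have hgH : g ∈ H := by simp [hHdef, Subgroup.mem_comap, hg, hk]
    exact ⟨⟨g, hgH⟩, by ext; exact hg⟩
  have hkerφ : φ.ker = N.subgroupOf H := by
    ext x
    simp [φ, MonoidHom.mem_ker, Subgroup.mem_subgroupOf, hN, Subgroup.ext_iff,
      MonoidHom.mem_ker]
    exact ⟨fun h => congrArg Subtype.val h, fun h => Subtype.ext h⟩
  have hkerfg : φ.ker.FG := by
    rw [hkerφ]
    haveI hNgrp : Group.FG N := (Group.fg_iff_subgroup_fg N).mpr hNfg
    have hfg2 : Group.FG (N.subgroupOf H) :=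
      Group.fg_of_surjective (f := (Subgroup.subgroupOfEquivOfLe hNH).symm.toMonoidHom)
        (Subgroup.subgroupOfEquivOfLe hNH).symm.surjective
    exact (Group.fg_iff_subgroup_fg _).mp hfg2
  have hquot : Group.FinitelyPresented (H ⧸ φ.ker) :=
    hHfp.quotient φ.ker hkerfg
  exact hquot.of_mulEquiv (QuotientGroup.quotientKerEquivOfSurjective φ hφsurj)
end

section
/- Let 1 → N → G → Q → 1 be a group extension, i.e., let p : G → Q be a surjective group homomorphism with kernel N. Suppose that every finitely generated subgroup of Q is finitely presented, and that for every finitely generated subgroup H of G the intersection N ∩ H is finitely presented. Then every finitely generated subgroup of G is finitely presented. (This is the case (n,m) = (1,2) of the Remark strengthening part (i) of the extension inheritance lemma: instead of assuming N is (0,2)-coherent, it suffices that the intersection of any finitely generated subgroup of G with N is finitely presented.) -/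
section Aux

open Subgroup Function

/-- Image of a normal closure is contained in the normal closure of the image. -/
private lemma map_ncl_le {G H : Type*} [Group G] [Group H] (f : G →* H) (s : Set G) :
    (Subgroup.normalClosure s).map f ≤ Subgroup.normalClosure (f '' s) := by
  rw [Subgroup.map_le_iff_le_comap]
  haveI : ((Subgroup.normalClosure (f '' s)).comap f).Normal :=
    Subgroup.Normal.comap inferInstance f
  exact Subgroup.normalClosure_le_normal fun x hx =>
    Subgroup.mem_comap.mpr (Subgroup.subset_normalClosure ⟨x, hx, rfl⟩)

/-- Finite presentability transfers along isomorphisms. -/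
private lemma fp_congr {A B : Type*} [Group A] [Group B] (e : A ≃* B)
    (h : Group.FinitelyPresented A) : Group.FinitelyPresented B := by
  obtain ⟨n, rels, ⟨θ⟩⟩ := h
  exact ⟨n, rels, ⟨e.symm.trans θ⟩⟩

/-- From finite presentability to a surjection from a free group with finitely
normally generated kernel. -/
private lemma fp_to_surj {P : Type*} [Group P] (h : Group.FinitelyPresented P) :
    ∃ (n : ℕ) (f : FreeGroup (Fin n) →* P), Surjective f ∧
      ∃ T : Set (FreeGroup (Fin n)), T.Finite ∧ f.ker = Subgroup.normalClosure T := by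
  obtain ⟨n, rels, ⟨θ⟩⟩ := h
  refine ⟨n, θ.symm.toMonoidHom.comp
      (PresentedGroup.mk (rels : Set (FreeGroup (Fin n)))),
    θ.symm.surjective.comp (PresentedGroup.mk_surjective _), ↑rels, rels.finite_toSet, ?_⟩
  ext x
  simp only [MonoidHom.mem_ker, MonoidHom.comp_apply, MulEquiv.coe_toMonoidHom,
    EmbeddingLike.map_eq_one_iff]
  exact QuotientGroup.eq_one_iff x

/-- From a surjection from a free group with finitely normally generated kernel to
finite presentability. -/
private lemma surj_to_fp {P : Type*} [Group P] {n : ℕ} (f : FreeGroup (Fin n) →* P)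
    (hf : Surjective f) (T : Set (FreeGroup (Fin n))) (hT : T.Finite)
    (hker : f.ker = Subgroup.normalClosure T) : Group.FinitelyPresented P := by
  refine ⟨n, hT.toFinset, ⟨?_⟩⟩
  have h1 : f.ker = Subgroup.normalClosure ((hT.toFinset : Set (FreeGroup (Fin n)))) := by
    rw [hT.coe_toFinset, hker]
  exact (QuotientGroup.quotientKerEquivOfSurjective f hf).symm.trans
    (QuotientGroup.quotientMulEquivOfEq h1)

/-- A finitely generated group admits a surjection from a finitely generated free group. -/
private lemma fg_to_surj {P : Type*} [Group P] (h : Group.FG P) :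
    ∃ (n : ℕ) (f : FreeGroup (Fin n) →* P), Surjective f := by
  obtain ⟨n, S, -, hS⟩ := Group.fg_iff'.mp h
  refine ⟨S.card, FreeGroup.lift (fun i => (S.equivFin.symm i : P)), ?_⟩
  rw [← MonoidHom.range_eq_top, FreeGroup.range_lift_eq_closure]
  have : Set.range (fun i => (S.equivFin.symm i : P)) = (S : Set P) := by
    ext x
    simp only [Set.mem_range, Finset.mem_coe]
    constructor
    · rintro ⟨i, rfl⟩; exact (S.equivFin.symm i).2
    · intro hx; exact ⟨S.equivFin ⟨x, hx⟩, by simp⟩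
  rw [this, hS]

/-- B. H. Neumann's lemma: if a group has one surjection from a f.g. free group with
finitely normally generated kernel, then every surjection from a f.g. free group has
finitely normally generated kernel. -/
private lemma ker_fin_ncl {P : Type*} [Group P] {m n : ℕ} (ψ : FreeGroup (Fin m) →* P)
    (hψ : Surjective ψ) {S : Set (FreeGroup (Fin m))} (hS : S.Finite)
    (hker : ψ.ker = Subgroup.normalClosure S) (φ : FreeGroup (Fin n) →* P)
    (hφ : Surjective φ) :
    ∃ T : Set (FreeGroup (Fin n)), T.Finite ∧ φ.ker = Subgroup.normalClosure T := by
  choose σ0 hσ0 using fun i => hφ (ψ (FreeGroup.of i))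
  choose τ0 hτ0 using fun j => hψ (φ (FreeGroup.of j))
  set σ : FreeGroup (Fin m) →* FreeGroup (Fin n) := FreeGroup.lift σ0 with hσdef
  set τ : FreeGroup (Fin n) →* FreeGroup (Fin m) := FreeGroup.lift τ0 with hτdef
  have hφσ : φ.comp σ = ψ := FreeGroup.ext_hom _ _ (by simp [hσdef, hσ0])
  have hψτ : ψ.comp τ = φ := FreeGroup.ext_hom _ _ (by simp [hτdef, hτ0])
  set T : Set (FreeGroup (Fin n)) :=
    σ '' S ∪ Set.range (fun j : Fin n => FreeGroup.of j * (σ (τ (FreeGroup.of j)))⁻¹) with hTdef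
  have hTfin : T.Finite := (hS.image σ).union (Set.finite_range _)
  have hTker : T ⊆ (φ.ker : Set (FreeGroup (Fin n))) := by
    rintro x (⟨s, hs, rfl⟩ | ⟨j, rfl⟩)
    · have : ψ s = 1 := by
        rw [← MonoidHom.mem_ker, hker]; exact Subgroup.subset_normalClosure hs
      simp only [SetLike.mem_coe, MonoidHom.mem_ker]
      calc φ (σ s) = (φ.comp σ) s := rfl
        _ = ψ s := by rw [hφσ]
        _ = 1 := this
    · simp only [SetLike.mem_coe, MonoidHom.mem_ker, map_mul, map_inv]
      have h1 : φ (σ (τ (FreeGroup.of j))) = φ (FreeGroup.of j) := by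
        calc φ (σ (τ (FreeGroup.of j))) = (φ.comp σ) (τ (FreeGroup.of j)) := rfl
          _ = ψ (τ (FreeGroup.of j)) := by rw [hφσ]
          _ = (ψ.comp τ) (FreeGroup.of j) := rfl
          _ = φ (FreeGroup.of j) := by rw [hψτ]
      rw [h1, mul_inv_cancel]
  refine ⟨T, hTfin, le_antisymm ?_ (Subgroup.normalClosure_le_normal hTker)⟩
  -- the quotient trick : ρ ∘ σ ∘ τ = ρ
  set R := Subgroup.normalClosure T with hRdef
  set ρ : FreeGroup (Fin n) →* FreeGroup (Fin n) ⧸ R := QuotientGroup.mk' R with hρdef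
  have key : ρ.comp (σ.comp τ) = ρ := by
    refine FreeGroup.ext_hom _ _ fun j => ?_
    have hmem : FreeGroup.of j * (σ (τ (FreeGroup.of j)))⁻¹ ∈ R :=
      Subgroup.subset_normalClosure (Set.mem_union_right _ ⟨j, rfl⟩)
    have : ρ (FreeGroup.of j * (σ (τ (FreeGroup.of j)))⁻¹) = 1 := by
      rw [← MonoidHom.mem_ker, hρdef, QuotientGroup.ker_mk']; exact hmem
    rw [map_mul, map_inv] at this
    simp only [MonoidHom.comp_apply]
    exact (mul_inv_eq_one.mp this).symm
  intro w hw
  have hτw : τ w ∈ ψ.ker := by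
    rw [MonoidHom.mem_ker]
    calc ψ (τ w) = (ψ.comp τ) w := rfl
      _ = φ w := by rw [hψτ]
      _ = 1 := hw
  have hστw : σ (τ w) ∈ R := by
    rw [hker] at hτw
    have : σ (τ w) ∈ (Subgroup.normalClosure S).map σ := ⟨τ w, hτw, rfl⟩
    exact Subgroup.normalClosure_mono Set.subset_union_left (map_ncl_le σ S this)
  have h1 : ρ (σ (τ w)) = ρ w := by
    calc ρ (σ (τ w)) = (ρ.comp (σ.comp τ)) w := rfl
      _ = ρ w := by rw [key]
  have h2 : ρ (σ (τ w)) = 1 := by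
    rw [← MonoidHom.mem_ker, hρdef, QuotientGroup.ker_mk']; exact hστw
  have h3 : ρ w = 1 := by rw [← h1, h2]
  exact (QuotientGroup.eq_one_iff w).mp h3

end Aux

open Pointwise

/-- Strengthened extension inheritance for coherence, case (n,m) = (1,2):
if `p : G → Q` is a surjective group homomorphism with kernel `N`, every finitely
generated subgroup of `Q` is finitely presented, and the intersection of `N` with any
finitely generated subgroup `H` of `G` is finitely presented, then every finitely
generated subgroup of `G` is finitely presented. -/
theorem coherent_of_group_extension_of_intersections_fp {G Q : Type*} [Group G] [Group Q]
    (p : G →* Q) (hp : Function.Surjective p) (N : Subgroup G) (hN : N = p.ker)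
    (hQ : ∀ K : Subgroup Q, K.FG → Group.FinitelyPresented K)
    (hint : ∀ H : Subgroup G, H.FG → Group.FinitelyPresented ↥(N ⊓ H)) :
    ∀ H : Subgroup G, H.FG → Group.FinitelyPresented H := by
  intro H hH
  classical
  -- surjection from a free group onto H
  obtain ⟨n, π, hπ⟩ := fg_to_surj ((Group.fg_iff_subgroup_fg H).mpr hH)
  haveI : Group.FG ↥H := (Group.fg_iff_subgroup_fg H).mpr hH
  set F := FreeGroup (Fin n) with hFdef
  -- the image subgroup K = p(H) in Q and the restricted map q' : H → K
  set K : Subgroup Q := H.map p with hKdef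
  have hmemK : ∀ h : ↥H, p ↑h ∈ K := fun h => ⟨↑h, h.2, rfl⟩
  set q' : ↥H →* ↥K := (p.comp H.subtype).codRestrict K hmemK with hq'def
  have hq'coe : ∀ h : ↥H, (q' h : Q) = p ↑h := fun h => rfl
  have hq' : Function.Surjective q' := by
    rintro ⟨k, g, hgH, rfl⟩
    exact ⟨⟨g, hgH⟩, rfl⟩
  have hKfg : K.FG := by
    rw [← Group.fg_iff_subgroup_fg]
    exact Group.fg_of_surjective hq'
  -- K is finitely presented; get a presentation of K
  obtain ⟨m, ψ, hψ, S, hSfin, hSker⟩ := fp_to_surj (hQ K hKfg)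
  -- the composed surjection onto K
  set π₂ : F →* ↥K := q'.comp π with hπ₂def
  have hπ₂ : Function.Surjective π₂ := hq'.comp hπ
  -- its kernel is finitely normally generated
  obtain ⟨W, hWfin, hWker⟩ := ker_fin_ncl ψ hψ hSfin hSker π₂ hπ₂
  -- the subgroup N ∩ H, as a subgroup of H
  set NH : Subgroup ↥H := (N ⊓ H).subgroupOf H with hNHdef
  have hNHker : NH = q'.ker := by
    ext x
    simp only [hNHdef, Subgroup.mem_subgroupOf, Subgroup.mem_inf, MonoidHom.mem_ker]
    constructor
    · rintro ⟨hxN, -⟩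
      have : p ↑x = 1 := by rw [hN] at hxN; exact hxN
      exact Subtype.ext (by rw [hq'coe, this]; rfl)
    · intro hx1
      have : p ↑x = 1 := by rw [← hq'coe, hx1]; rfl
      exact ⟨by rw [hN]; exact this, x.2⟩
  have hπ₂ker : ∀ w : F, w ∈ π₂.ker ↔ π w ∈ NH := by
    intro w
    rw [hNHker, MonoidHom.mem_ker, MonoidHom.mem_ker, hπ₂def, MonoidHom.comp_apply]
  -- N ∩ H is finitely presented; get a presentation of NH
  have hNHfp : Group.FinitelyPresented ↥NH :=
    fp_congr (Subgroup.subgroupOfEquivOfLe (inf_le_right : N ⊓ H ≤ H)).symm (hint H hH)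
  obtain ⟨k, g, hg, B, hBfin, hBker⟩ := fp_to_surj hNHfp
  -- choose lifts v of the generators of NH to the free group
  choose v hv using fun j : Fin k => hπ ((g (FreeGroup.of j) : ↥H))
  set e : FreeGroup (Fin k) →* F := FreeGroup.lift v with hedef
  have hcomm : π.comp e = NH.subtype.comp g :=
    FreeGroup.ext_hom _ _ (by simp [hedef, hv])
  have hcomm' : ∀ x : FreeGroup (Fin k), π (e x) = ↑(g x) := fun x => by
    calc π (e x) = (π.comp e) x := rfl
      _ = (NH.subtype.comp g) x := by rw [hcomm]
      _ = ↑(g x) := rfl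
  -- elements of W map into NH
  have hWNH : ∀ w ∈ W, π w ∈ NH := fun w hw =>
    (hπ₂ker w).mp (by rw [hWker]; exact Subgroup.subset_normalClosure hw)
  haveI : Finite ↥W := hWfin.to_subtype
  -- choose expressions of the images of W as words in the generators of NH
  choose A hA using fun w : ↥W => hg ⟨π ↑w, hWNH ↑w w.2⟩
  have hπA : ∀ w : ↥W, π (e (A w)) = π ↑w := fun w => by
    rw [hcomm', hA]
  -- conjugation relators
  set c : Fin n × Fin k × Bool → F := fun d =>
    (cond d.2.2 (FreeGroup.of d.1) (FreeGroup.of d.1)⁻¹) * v d.2.1 *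
      (cond d.2.2 (FreeGroup.of d.1) (FreeGroup.of d.1)⁻¹)⁻¹ with hcdef
  have hvNH : ∀ j : Fin k, π (v j) ∈ NH := fun j => by
    rw [hv]; exact (g (FreeGroup.of j)).2
  have hcNH : ∀ d, π (c d) ∈ NH := by
    intro d
    rw [← hπ₂ker]
    have hvker : v d.2.1 ∈ π₂.ker := (hπ₂ker _).mpr (hvNH d.2.1)
    rw [MonoidHom.mem_ker] at hvker ⊢
    simp only [hcdef, map_mul, map_inv, hvker, mul_one, mul_inv_cancel]
  choose U hU using fun d : Fin n × Fin k × Bool => hg ⟨π (c d), hcNH d⟩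
  have hπU : ∀ d, π (e (U d)) = π (c d) := fun d => by rw [hcomm', hU]
  -- the relator set
  set T : Set F := Set.range (fun w : ↥W => ↑w * (e (A w))⁻¹) ∪
      Set.range (fun d : Fin n × Fin k × Bool => c d * (e (U d))⁻¹) ∪ e '' B with hTdef
  have hTfin : T.Finite :=
    ((Set.finite_range _).union (Set.finite_range _)).union (hBfin.image e)
  set R₁ : Subgroup F := Subgroup.normalClosure T with hR₁def
  have hR₁n : R₁.Normal := by rw [hR₁def]; exact Subgroup.normalClosure_normal
  haveI := hR₁n
  -- R₁ is contained in ker π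
  have hR₁le : R₁ ≤ π.ker := by
    refine Subgroup.normalClosure_le_normal ?_
    rintro x ((⟨w, rfl⟩ | ⟨d, rfl⟩) | ⟨b, hb, rfl⟩) <;>
      simp only [SetLike.mem_coe, MonoidHom.mem_ker, map_mul, map_inv]
    · rw [map_inv π, hπA, mul_inv_cancel]
    · rw [map_inv π, hπU, mul_inv_cancel]
    · have : g b = 1 := by
        rw [← MonoidHom.mem_ker, hBker]; exact Subgroup.subset_normalClosure hb
      rw [hcomm', this]; rfl
  -- the subgroup L
  set L : Subgroup F := Subgroup.closure (Set.range v) ⊔ R₁ with hLdef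
  have heL : ∀ x : FreeGroup (Fin k), e x ∈ L := by
    intro x
    have : e x ∈ (FreeGroup.lift v).range := ⟨x, rfl⟩
    rw [FreeGroup.range_lift_eq_closure] at this
    exact le_sup_left (α := Subgroup F) this
  have hR₁L : R₁ ≤ L := le_sup_right
  have hTL : ∀ x ∈ T, x ∈ L := fun x hx => hR₁L (Subgroup.subset_normalClosure hx)
  -- conjugates of the v j by generators lie in L
  have hconj : ∀ (t : Fin n) (j : Fin k) (b : Bool),
      (cond b (FreeGroup.of t) (FreeGroup.of t)⁻¹) * v j *
        (cond b (FreeGroup.of t) (FreeGroup.of t)⁻¹)⁻¹ ∈ L := by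
    intro t j b
    have h1 : c (t, j, b) * (e (U (t, j, b)))⁻¹ ∈ L :=
      hTL _ (Set.mem_union_left _ (Set.mem_union_right _ ⟨(t, j, b), rfl⟩))
    have h2 : c (t, j, b) = (c (t, j, b) * (e (U (t, j, b)))⁻¹) * e (U (t, j, b)) := by
      exact (inv_mul_cancel_right (c (t, j, b)) (e (U (t, j, b)))).symm
    have : c (t, j, b) ∈ L := h2 ▸ L.mul_mem h1 (heL _)
    simpa only [hcdef] using this
  -- L is normal
  have hLnormal : L.Normal := by
    rw [← Subgroup.normalizer_eq_top_iff]
    rw [eq_top_iff, ← FreeGroup.closure_range_of (Fin n), Subgroup.closure_le]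
    rintro x ⟨t, rfl⟩
    rw [SetLike.mem_coe, Subgroup.mem_normalizer_iff]
    -- first, conjugation by of t and by (of t)⁻¹ maps L into L
    have main : ∀ (y : F), (∀ j : Fin k, y * v j * y⁻¹ ∈ L) → ∀ l ∈ L, y * l * y⁻¹ ∈ L := by
      intro y hy l hl
      have : L ≤ L.comap (MulAut.conj y).toMonoidHom := by
        rw [hLdef, sup_le_iff]
        constructor
        · rw [Subgroup.closure_le]
          rintro x' ⟨j, rfl⟩
          simpa [MulAut.conj] using hy j
        · intro r hr
          have hc : y * r * y⁻¹ ∈ R₁ := hR₁n.conj_mem r hr y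
          rw [Subgroup.mem_comap]
          simpa [MulAut.conj_apply] using hR₁L hc
      have := this hl
      simpa [MulAut.conj] using this
    have hfwd : ∀ l ∈ L, FreeGroup.of t * l * (FreeGroup.of t)⁻¹ ∈ L :=
      main (FreeGroup.of t) (fun j => by simpa using hconj t j true)
    have hbwd : ∀ l ∈ L, (FreeGroup.of t)⁻¹ * l * FreeGroup.of t ∈ L := by
      intro l hl
      have h0 := main (FreeGroup.of t)⁻¹ (fun j => by
        rw [show ((FreeGroup.of t : F)⁻¹)⁻¹ = FreeGroup.of t from inv_inv _]
        simpa using hconj t j false) l hl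
      rw [show ((FreeGroup.of t : F)⁻¹)⁻¹ = FreeGroup.of t from inv_inv _] at h0
      exact h0
    intro h
    constructor
    · exact fun hh => hfwd h hh
    · intro hh
      have := hbwd _ hh
      simpa [mul_assoc] using this
  -- W is contained in L, hence ker π₂ ≤ L
  have hWL : ∀ w ∈ W, w ∈ L := by
    intro w hw
    have h1 : (w : F) * (e (A ⟨w, hw⟩))⁻¹ ∈ L :=
      hTL _ (Set.mem_union_left _ (Set.mem_union_left _ ⟨⟨w, hw⟩, rfl⟩))
    have h2 : w = ((w : F) * (e (A ⟨w, hw⟩))⁻¹) * e (A ⟨w, hw⟩) := by exact (inv_mul_cancel_right _ _).symm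
    exact h2 ▸ L.mul_mem h1 (heL _)
  have hMleL : π₂.ker ≤ L := by
    haveI := hLnormal
    rw [hWker]
    exact Subgroup.normalClosure_le_normal hWL
  -- finally, ker π ≤ R₁
  have hkerle : π.ker ≤ R₁ := by
    intro r hr
    have hr2 : r ∈ π₂.ker := by
      rw [MonoidHom.mem_ker] at hr ⊢
      rw [hπ₂def, MonoidHom.comp_apply, hr, map_one]
    have hrL : r ∈ L := hMleL hr2
    rw [hLdef] at hrL
    have : r ∈ ((Subgroup.closure (Set.range v) : Set F) * (R₁ : Set F)) := by
      rw [← Subgroup.mul_normal]; exact hrL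
    obtain ⟨h, hh, ρ, hρ, rfl⟩ := this
    -- h = e u for some u
    have : h ∈ (FreeGroup.lift v).range := by
      rw [FreeGroup.range_lift_eq_closure]; exact hh
    obtain ⟨u, rfl⟩ := this
    have hρ1 : π ρ = 1 := hR₁le hρ
    have heu1 : π (e u) = 1 := by
      rw [MonoidHom.mem_ker, map_mul, hρ1, mul_one] at hr
      exact hr
    have hgu : g u = 1 := by
      have : (↑(g u) : ↥H) = 1 := by rw [← hcomm', heu1]
      exact Subtype.ext (by rw [this]; rfl)
    have hu : u ∈ g.ker := by rw [MonoidHom.mem_ker]; exact hgu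
    rw [hBker] at hu
    have heu : e u ∈ R₁ := by
      have h1 : e u ∈ (Subgroup.normalClosure B).map e := ⟨u, hu, rfl⟩
      have h2 := map_ncl_le e B h1
      exact Subgroup.normalClosure_mono (Set.subset_union_right) h2
    exact R₁.mul_mem heu hρ
  exact surj_to_fp π hπ T hTfin (le_antisymm hkerle hR₁le)
end

section
/- Let Γ be a finite simple graph, and let Γ₁ and Γ₂ be induced subgraphs of Γ such that every vertex of Γ lies in Γ₁ or Γ₂, every edge of Γ joins two vertices of Γ₁ or two vertices of Γ₂, and let Γ₀ be the induced subgraph on the intersection of the vertex sets of Γ₁ and Γ₂. Then the right-angled Artin group A_Γ is isomorphic to the amalgamated free product A_{Γ₁} *_{A_{Γ₀}} A_{Γ₂}, the pushout of the (injective) homomorphisms A_{Γ₀} → A_{Γ₁} and A_{Γ₀} → A_{Γ₂} induced by the inclusions of induced subgraphs. -/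
universe u

/-- The relators of the right-angled Artin group of a simple graph: one commutator
relator for each pair of adjacent vertices. -/
def raagRels {V : Type u} (Γ : SimpleGraph V) : Set (FreeGroup V) :=
  { r | ∃ v w : V, Γ.Adj v w ∧
      r = FreeGroup.of v * FreeGroup.of w * (FreeGroup.of v)⁻¹ * (FreeGroup.of w)⁻¹ }

/-- The right-angled Artin group of a simple graph `Γ`: the group generated by the
vertices of `Γ`, subject only to the relations that adjacent vertices commute. -/
abbrev RAAG {V : Type u} (Γ : SimpleGraph V) : Type u :=
  PresentedGroup (raagRels Γ)

/-- The generator of a right-angled Artin group corresponding to a vertex. -/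
def RAAG.gen {V : Type u} (Γ : SimpleGraph V) (v : V) : RAAG Γ :=
  PresentedGroup.of v

lemma raag_commute {V : Type u} (Γ : SimpleGraph V) {v w : V} (h : Γ.Adj v w) :
    Commute (RAAG.gen Γ v) (RAAG.gen Γ w) := by
  rw [← commutatorElement_eq_one_iff_commute]
  have h1 : (QuotientGroup.mk (FreeGroup.of v * FreeGroup.of w * (FreeGroup.of v)⁻¹ *
      (FreeGroup.of w)⁻¹) : RAAG Γ) = 1 :=
    (QuotientGroup.eq_one_iff _).2 (Subgroup.subset_normalClosure ⟨v, w, h, rfl⟩)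
  exact h1

def raagLift {V : Type u} {Γ : SimpleGraph V} {G : Type*} [Group G] (F : V → G)
    (hF : ∀ v w, Γ.Adj v w → Commute (F v) (F w)) : RAAG Γ →* G :=
  PresentedGroup.toGroup (f := F) (by
    rintro r ⟨v, w, hvw, rfl⟩
    simp only [map_mul, map_inv, FreeGroup.lift_apply_of]
    rw [← commutatorElement_def]
    exact commutatorElement_eq_one_iff_commute.mpr (hF v w hvw))

@[simp] lemma raagLift_gen {V : Type u} {Γ : SimpleGraph V} {G : Type*} [Group G] (F : V → G)
    (hF : ∀ v w, Γ.Adj v w → Commute (F v) (F w)) (v : V) :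
    raagLift F hF (RAAG.gen Γ v) = F v :=
  PresentedGroup.toGroup.of _

lemma raag_hom_ext {V : Type u} {Γ : SimpleGraph V} {G : Type*} [Group G]
    {f g : RAAG Γ →* G} (h : ∀ v, f (RAAG.gen Γ v) = g (RAAG.gen Γ v)) : f = g :=
  PresentedGroup.ext h


lemma raag_cover_desc {V : Type u} (Γ : SimpleGraph V) (S₁ S₂ : Set V)
    (hcover : S₁ ∪ S₂ = Set.univ)
    (hedges : ∀ v w : V, Γ.Adj v w → (v ∈ S₁ ∧ w ∈ S₁) ∨ (v ∈ S₂ ∧ w ∈ S₂))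
    {H : Type*} [Group H] (k₁ : RAAG (Γ.induce S₁) →* H) (k₂ : RAAG (Γ.induce S₂) →* H)
    (hk : ∀ (v : V) (h1 : v ∈ S₁) (h2 : v ∈ S₂),
      k₁ (RAAG.gen _ ⟨v, h1⟩) = k₂ (RAAG.gen _ ⟨v, h2⟩)) :
    ∃! d : RAAG Γ →* H,
      (∀ v : ↥S₁, d (RAAG.gen Γ v.1) = k₁ (RAAG.gen _ v)) ∧
      (∀ v : ↥S₂, d (RAAG.gen Γ v.1) = k₂ (RAAG.gen _ v)) := by
  classical
  have hmem : ∀ v : V, v ∈ S₁ ∨ v ∈ S₂ := by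
    intro v
    have : v ∈ S₁ ∪ S₂ := hcover ▸ Set.mem_univ v
    exact this
  set F : V → H := fun v => if h : v ∈ S₁ then k₁ (RAAG.gen _ ⟨v, h⟩)
    else k₂ (RAAG.gen _ ⟨v, (hmem v).resolve_left h⟩) with hF
  have hF₁ : ∀ (v) (h : v ∈ S₁), F v = k₁ (RAAG.gen _ ⟨v, h⟩) := fun v h => dif_pos h
  have hF₂ : ∀ (v) (h : v ∈ S₂), F v = k₂ (RAAG.gen _ ⟨v, h⟩) := by
    intro v h
    by_cases h1 : v ∈ S₁
    · rw [hF₁ v h1, hk v h1 h]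
    · simp only [hF, dif_neg h1]
  have hcomm : ∀ v w, Γ.Adj v w → Commute (F v) (F w) := by
    intro v w h
    rcases hedges v w h with ⟨hv, hw⟩ | ⟨hv, hw⟩
    · rw [hF₁ v hv, hF₁ w hw]
      exact (raag_commute (Γ.induce S₁) (v := ⟨v, hv⟩) (w := ⟨w, hw⟩) (by exact h)).map k₁
    · rw [hF₂ v hv, hF₂ w hw]
      exact (raag_commute (Γ.induce S₂) (v := ⟨v, hv⟩) (w := ⟨w, hw⟩) (by exact h)).map k₂
  refine ⟨raagLift F hcomm, ⟨fun v => ?_, fun v => ?_⟩, ?_⟩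
  · rw [raagLift_gen]; exact hF₁ v.1 v.2
  · rw [raagLift_gen]; exact hF₂ v.1 v.2
  · rintro d ⟨hd₁, hd₂⟩
    apply raag_hom_ext
    intro v
    rw [raagLift_gen]
    rcases hmem v with h | h
    · rw [hF₁ v h]; exact hd₁ ⟨v, h⟩
    · rw [hF₂ v h]; exact hd₂ ⟨v, h⟩

/-- If a finite simple graph `Γ` is covered by two induced subgraphs `Γ₁ = Γ[S₁]` and
`Γ₂ = Γ[S₂]` (every vertex and every edge of `Γ` lies in `Γ₁` or in `Γ₂`), and
`Γ₀ = Γ[S₁ ∩ S₂]`, then the right-angled Artin group `A_Γ` is the amalgamated free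
product `A_{Γ₁} *_{A_{Γ₀}} A_{Γ₂}`: the natural homomorphisms induced by the
inclusions of induced subgraphs form a pushout square in the category of groups,
and the two maps out of `A_{Γ₀}` are injective. -/
theorem raag_isPushout_of_cover {V : Type u} [Fintype V] (Γ : SimpleGraph V)
    (S₁ S₂ : Set V) (hcover : S₁ ∪ S₂ = Set.univ)
    (hedges : ∀ v w : V, Γ.Adj v w → (v ∈ S₁ ∧ w ∈ S₁) ∨ (v ∈ S₂ ∧ w ∈ S₂)) :
    ∃ (f₁ : RAAG (Γ.induce (S₁ ∩ S₂)) →* RAAG (Γ.induce S₁))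
      (f₂ : RAAG (Γ.induce (S₁ ∩ S₂)) →* RAAG (Γ.induce S₂))
      (g₁ : RAAG (Γ.induce S₁) →* RAAG Γ)
      (g₂ : RAAG (Γ.induce S₂) →* RAAG Γ),
      (∀ v : ↥(S₁ ∩ S₂), f₁ (RAAG.gen _ v) = RAAG.gen _ ⟨v.1, v.2.1⟩) ∧
      (∀ v : ↥(S₁ ∩ S₂), f₂ (RAAG.gen _ v) = RAAG.gen _ ⟨v.1, v.2.2⟩) ∧
      (∀ v : ↥S₁, g₁ (RAAG.gen _ v) = RAAG.gen Γ v.1) ∧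
      (∀ v : ↥S₂, g₂ (RAAG.gen _ v) = RAAG.gen Γ v.1) ∧
      Function.Injective f₁ ∧ Function.Injective f₂ ∧
      CategoryTheory.IsPushout
        (GrpCat.ofHom f₁) (GrpCat.ofHom f₂) (GrpCat.ofHom g₁) (GrpCat.ofHom g₂) := by
  classical
  have hmem : ∀ v : V, v ∈ S₁ ∨ v ∈ S₂ := by
    intro v
    have : v ∈ S₁ ∪ S₂ := hcover ▸ Set.mem_univ v
    exact this
  -- the four homs
  set f₁ : RAAG (Γ.induce (S₁ ∩ S₂)) →* RAAG (Γ.induce S₁) :=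
    raagLift (fun v => RAAG.gen (Γ.induce S₁) ⟨v.1, v.2.1⟩)
      (fun v w h => raag_commute _ h) with hf₁def
  set f₂ : RAAG (Γ.induce (S₁ ∩ S₂)) →* RAAG (Γ.induce S₂) :=
    raagLift (fun v => RAAG.gen (Γ.induce S₂) ⟨v.1, v.2.2⟩)
      (fun v w h => raag_commute _ h) with hf₂def
  set g₁ : RAAG (Γ.induce S₁) →* RAAG Γ :=
    raagLift (fun v => RAAG.gen Γ v.1) (fun v w h => raag_commute _ h) with hg₁def
  set g₂ : RAAG (Γ.induce S₂) →* RAAG Γ :=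
    raagLift (fun v => RAAG.gen Γ v.1) (fun v w h => raag_commute _ h) with hg₂def
  have hf₁ : ∀ v : ↥(S₁ ∩ S₂), f₁ (RAAG.gen _ v) = RAAG.gen _ ⟨v.1, v.2.1⟩ :=
    fun v => raagLift_gen _ _ v
  have hf₂ : ∀ v : ↥(S₁ ∩ S₂), f₂ (RAAG.gen _ v) = RAAG.gen _ ⟨v.1, v.2.2⟩ :=
    fun v => raagLift_gen _ _ v
  have hg₁ : ∀ v : ↥S₁, g₁ (RAAG.gen _ v) = RAAG.gen Γ v.1 := fun v => raagLift_gen _ _ v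
  have hg₂ : ∀ v : ↥S₂, g₂ (RAAG.gen _ v) = RAAG.gen Γ v.1 := fun v => raagLift_gen _ _ v
  -- retractions for injectivity
  have hr₁com : ∀ v w : ↥S₁, (Γ.induce S₁).Adj v w →
      Commute (if h : v.1 ∈ S₂ then RAAG.gen (Γ.induce (S₁ ∩ S₂)) ⟨v.1, v.2, h⟩ else 1)
        (if h : w.1 ∈ S₂ then RAAG.gen (Γ.induce (S₁ ∩ S₂)) ⟨w.1, w.2, h⟩ else 1) := by
    intro v w h
    by_cases hv : v.1 ∈ S₂ <;> by_cases hw : w.1 ∈ S₂ <;>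
      simp only [dif_pos, dif_neg, hv, hw, Commute.one_left, Commute.one_right, dite_true,
        dite_false]
    exact raag_commute _ (by exact h)
  let r₁ : RAAG (Γ.induce S₁) →* RAAG (Γ.induce (S₁ ∩ S₂)) :=
    raagLift (fun v => if h : v.1 ∈ S₂ then RAAG.gen (Γ.induce (S₁ ∩ S₂)) ⟨v.1, v.2, h⟩ else 1)
      hr₁com
  have hinj₁ : Function.Injective f₁ := by
    have : r₁.comp f₁ = MonoidHom.id _ := by
      apply raag_hom_ext
      intro v
      simp only [MonoidHom.comp_apply, MonoidHom.id_apply, hf₁]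
      simp only [r₁, raagLift_gen, dif_pos v.2.2]
    exact Function.LeftInverse.injective (g := r₁) fun x => DFunLike.congr_fun this x
  -- second retraction
  have hr₂com : ∀ v w : ↥S₂, (Γ.induce S₂).Adj v w →
      Commute (if h : v.1 ∈ S₁ then RAAG.gen (Γ.induce (S₁ ∩ S₂)) ⟨v.1, h, v.2⟩ else 1)
        (if h : w.1 ∈ S₁ then RAAG.gen (Γ.induce (S₁ ∩ S₂)) ⟨w.1, h, w.2⟩ else 1) := by
    intro v w h
    by_cases hv : v.1 ∈ S₁ <;> by_cases hw : w.1 ∈ S₁ <;>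
      simp only [dif_pos, dif_neg, hv, hw, Commute.one_left, Commute.one_right, dite_true,
        dite_false]
    exact raag_commute _ (by exact h)
  let r₂ : RAAG (Γ.induce S₂) →* RAAG (Γ.induce (S₁ ∩ S₂)) :=
    raagLift (fun v => if h : v.1 ∈ S₁ then RAAG.gen (Γ.induce (S₁ ∩ S₂)) ⟨v.1, h, v.2⟩ else 1)
      hr₂com
  have hinj₂ : Function.Injective f₂ := by
    have : r₂.comp f₂ = MonoidHom.id _ := by
      apply raag_hom_ext
      intro v
      simp only [MonoidHom.comp_apply, MonoidHom.id_apply, hf₂]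
      simp only [r₂, raagLift_gen, dif_pos v.2.1]
    exact Function.LeftInverse.injective (g := r₂) fun x => DFunLike.congr_fun this x
  refine ⟨f₁, f₂, g₁, g₂, hf₁, hf₂, hg₁, hg₂, hinj₁, hinj₂, ?_⟩
  have hsq : g₁.comp f₁ = g₂.comp f₂ := by
    apply raag_hom_ext
    intro v
    simp only [MonoidHom.comp_apply]
    rw [hf₁ v, hf₂ v, hg₁ _, hg₂ _]
  have w : CategoryTheory.CommSq (GrpCat.ofHom f₁) (GrpCat.ofHom f₂) (GrpCat.ofHom g₁) (GrpCat.ofHom g₂) :=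
    ⟨GrpCat.hom_ext hsq⟩
  have hdesc : ∀ s : CategoryTheory.Limits.PushoutCocone (GrpCat.ofHom f₁) (GrpCat.ofHom f₂),
      ∃! d : RAAG Γ →* ↥s.pt,
        (∀ v : ↥S₁, d (RAAG.gen Γ v.1) = s.inl (RAAG.gen _ v)) ∧
        (∀ v : ↥S₂, d (RAAG.gen Γ v.1) = s.inr (RAAG.gen _ v)) := by
    intro s
    have hk : ∀ (v : V) (h1 : v ∈ S₁) (h2 : v ∈ S₂),
        s.inl (RAAG.gen (Γ.induce S₁) ⟨v, h1⟩) = s.inr (RAAG.gen (Γ.induce S₂) ⟨v, h2⟩) := by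
      intro v h1 h2
      have hc := CategoryTheory.ConcreteCategory.congr_hom s.condition
        (RAAG.gen (Γ.induce (S₁ ∩ S₂)) ⟨v, h1, h2⟩)
      simpa [hf₁, hf₂] using hc
    exact raag_cover_desc Γ S₁ S₂ hcover hedges s.inl.hom s.inr.hom hk
  refine CategoryTheory.IsPushout.of_isColimit' w ?_
  refine CategoryTheory.Limits.PushoutCocone.IsColimit.mk w.w
    (fun s => GrpCat.ofHom (hdesc s).choose) ?_ ?_ ?_
  · intro s
    have heq : ((hdesc s).choose).comp g₁ = s.inl.hom := by
      apply raag_hom_ext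
      intro v
      simp only [MonoidHom.comp_apply, hg₁]
      exact (hdesc s).choose_spec.1.1 v
    exact GrpCat.hom_ext heq
  · intro s
    have heq : ((hdesc s).choose).comp g₂ = s.inr.hom := by
      apply raag_hom_ext
      intro v
      simp only [MonoidHom.comp_apply, hg₂]
      exact (hdesc s).choose_spec.1.2 v
    exact GrpCat.hom_ext heq
  · intro s m hl hr
    refine GrpCat.hom_ext ((hdesc s).choose_spec.2 m.hom ⟨fun v => ?_, fun v => ?_⟩)
    · have := CategoryTheory.ConcreteCategory.congr_hom hl (RAAG.gen _ v)
      simpa [hg₁] using this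
    · have := CategoryTheory.ConcreteCategory.congr_hom hr (RAAG.gen _ v)
      simpa [hg₂] using this
end
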